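/- arXiv:2008.04796 — 6 statements merged into one kernel-verified Lean document; each statement's English description precedes it below -/
import Mathlib

section
/- For every real q ≥ 2 and every dimension d ≥ 1 there exists a constant c > 0, depending only on q, such that for all vectors a, b ∈ ℝ^d one has ⟪‖a‖^{q−2}·a − ‖b‖^{q−2}·b, a − b⟫ ≥ c·‖a − b‖^q. -/
set_option maxHeartbeats 800000

private lemma rpow_split {s q : ℝ} (hs : 0 ≤ s) (hq : 2 ≤ q) :
    s ^ (q - 2) * s ^ 2 = s ^ q := by
  rcases hs.eq_or_lt with h | h
  · rw [← h]
    simp [Real.zero_rpow (show q ≠ 0 by linarith)]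
  · rw [show (s:ℝ) ^ 2 = s ^ ((2:ℕ):ℝ) by rw [Real.rpow_natCast],
      ← Real.rpow_add h]
    norm_num

/-- **Strong monotonicity of the `q`-power vector field** (paper, Section 2.4).
For every real `q ≥ 2` there is `c > 0` depending only on `q` such that for every
dimension `d ≥ 1` and all `a, b ∈ ℝ^d` one has
`⟪‖a‖^{q-2} a − ‖b‖^{q-2} b, a − b⟫ ≥ c ‖a − b‖^q`. -/
theorem q_power_monotonicity (q : ℝ) (hq : 2 ≤ q) :
    ∃ c : ℝ, 0 < c ∧ ∀ d : ℕ, 1 ≤ d →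
      ∀ a b : EuclideanSpace ℝ (Fin d),
        (inner ℝ (‖a‖ ^ (q - 2) • a - ‖b‖ ^ (q - 2) • b) (a - b) : ℝ) ≥ c * ‖a - b‖ ^ q := by
  refine ⟨(2:ℝ) ^ (1 - q), Real.rpow_pos_of_pos two_pos _, fun d _ a b => ?_⟩
  have hq2 : 0 ≤ q - 2 := by linarith
  by_cases hab : a = b
  · subst hab
    simp [Real.zero_rpow (show q ≠ 0 by linarith)]
  set s := ‖a‖ with hsdef
  set t := ‖b‖ with htdef
  set n := ‖a - b‖ with hndef
  have hs : 0 ≤ s := norm_nonneg _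
  have ht : 0 ≤ t := norm_nonneg _
  have hn : 0 < n := by rw [hndef]; rwa [norm_pos_iff, sub_ne_zero]
  have hip : (inner ℝ (s ^ (q-2) • a - t ^ (q-2) • b) (a-b) : ℝ)
      = s ^ (q-2) * (s^2 - inner ℝ a b) + t ^ (q-2) * (t^2 - inner ℝ a b) := by
    simp only [inner_sub_left, inner_sub_right, real_inner_smul_left,
      real_inner_self_eq_norm_sq, real_inner_comm b a, ← hsdef, ← htdef]
    ring
  have hnsq : n ^ 2 = s^2 - 2 * inner ℝ a b + t^2 := by
    rw [hndef, hsdef, htdef]; exact norm_sub_sq_real a b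
  have key : s ^ (q-2) * t^2 + t ^ (q-2) * s^2 ≤ s ^ q + t ^ q := by
    have h1 : 0 ≤ (s ^ (q-2) - t ^ (q-2)) * (s^2 - t^2) := by
      rcases le_total s t with h | h
      · have h3 := Real.rpow_le_rpow hs h hq2
        have h2 : s^2 ≤ t^2 := by nlinarith
        nlinarith
      · have h3 := Real.rpow_le_rpow ht h hq2
        have h2 : t^2 ≤ s^2 := by nlinarith
        nlinarith
    nlinarith [rpow_split hs hq, rpow_split ht hq]
  -- Step A : inner ≥ (1/2)(s^(q-2)+t^(q-2)) n^2
  have stepA : (inner ℝ (s ^ (q-2) • a - t ^ (q-2) • b) (a-b) : ℝ)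
      ≥ (1/2) * (s ^ (q-2) + t ^ (q-2)) * n^2 := by
    rw [hip, hnsq]
    nlinarith [rpow_split hs hq, rpow_split ht hq, key]
  -- Step C : n^(q-2) ≤ 2^(q-2) (s^(q-2)+t^(q-2))
  have hC : n ^ (q-2) ≤ 2 ^ (q-2) * (s ^ (q-2) + t ^ (q-2)) := by
    have h1 : n ≤ s + t := norm_sub_le a b
    have h2 : s + t ≤ 2 * max s t := by
      rcases le_total s t with h | h
      · rw [max_eq_right h]; linarith
      · rw [max_eq_left h]; linarith
    have hmax : (max s t) ^ (q-2) ≤ s ^ (q-2) + t ^ (q-2) := by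
      rcases le_total s t with h | h
      · rw [max_eq_right h]
        nlinarith [Real.rpow_nonneg hs (q-2)]
      · rw [max_eq_left h]
        nlinarith [Real.rpow_nonneg ht (q-2)]
    calc n ^ (q-2) ≤ (2 * max s t) ^ (q-2) :=
          Real.rpow_le_rpow hn.le (h1.trans h2) hq2
      _ = 2 ^ (q-2) * (max s t) ^ (q-2) :=
          Real.mul_rpow (by norm_num) (le_max_of_le_left hs)
      _ ≤ 2 ^ (q-2) * (s ^ (q-2) + t ^ (q-2)) := by
          have : (0:ℝ) ≤ 2 ^ (q-2) := Real.rpow_nonneg (by norm_num) _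
          nlinarith
  -- derive lower bound on the sum
  have hsum : (2:ℝ) ^ ((2:ℝ)-q) * n ^ (q-2) ≤ s ^ (q-2) + t ^ (q-2) := by
    have hpos : (0:ℝ) < (2:ℝ) ^ ((2:ℝ)-q) := Real.rpow_pos_of_pos two_pos _
    have hmul : (2:ℝ) ^ ((2:ℝ)-q) * (2:ℝ) ^ (q-2) = 1 := by
      rw [← Real.rpow_add two_pos]; norm_num
    calc (2:ℝ) ^ ((2:ℝ)-q) * n ^ (q-2) ≤ (2:ℝ) ^ ((2:ℝ)-q) * ((2:ℝ) ^ (q-2) * (s ^ (q-2) + t ^ (q-2))) :=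
          mul_le_mul_of_nonneg_left hC hpos.le
      _ = s ^ (q-2) + t ^ (q-2) := by rw [← mul_assoc, hmul, one_mul]
  -- conclude
  have h2q : (2:ℝ) ^ ((2:ℝ)-q) = 2 * (2:ℝ) ^ ((1:ℝ)-q) := by
    rw [show (2:ℝ)-q = 1 + (1-q) by ring, Real.rpow_add two_pos, Real.rpow_one]
  have hnq : n ^ (q-2) * n ^ 2 = n ^ q := rpow_split hn.le hq
  have hn2 : (0:ℝ) ≤ n ^ 2 := sq_nonneg n
  calc (inner ℝ (s ^ (q-2) • a - t ^ (q-2) • b) (a-b) : ℝ)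
      ≥ (1/2) * (s ^ (q-2) + t ^ (q-2)) * n^2 := stepA
    _ ≥ (1/2) * ((2:ℝ) ^ ((2:ℝ)-q) * n ^ (q-2)) * n^2 := by nlinarith
    _ = (2:ℝ) ^ ((1:ℝ)-q) * n ^ q := by rw [h2q, ← hnq]; ring
end

section
/- Let n ≥ 1, let Q ⊆ ℝⁿ be a bounded measurable set and Γ ⊆ closure(Q) a subset satisfying, for some c₀ > 0, the measure density condition vol(B_r(x) ∩ Q) ≥ c₀·rⁿ for every x ∈ Γ and every r ∈ (0,1], and let L, ε₀ > 0. Then there exists γ₀ > 0, depending only on n, c₀, L and ε₀, with the following property: for every δ₀ > 0 and all L-Lipschitz maps η₀, η : closure(Q) → ℝⁿ such that |η₀(x₀) − η₀(x₁)| > ε₀ whenever x₀, x₁ ∈ Γ satisfy |x₀ − x₁| ≥ δ₀, and such that (∫_Q |η(x) − η₀(x)|² dx)^{1/2} < γ₀, one has |η(x₀) − η(x₁)| > ε₀/2 whenever x₀, x₁ ∈ Γ satisfy |x₀ − x₁| ≥ δ₀. -/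
open MeasureTheory Set Metric

/-- **Quantitative short-time preservation of boundary separation** (paper, Section 2.1).
For `n, c₀, L, ε₀` there is `γ₀ > 0` such that whenever `η₀` keeps `δ₀`-separated points of
`Γ` at distance `> ε₀` and `η` is `L²`-close to `η₀` (both `L`-Lipschitz on `closure Q`),
then `η` keeps such points at distance `> ε₀/2`. -/
theorem boundary_separation_preserved (n : ℕ) (hn : 1 ≤ n) (c₀ L ε₀ : ℝ)
    (hc₀ : 0 < c₀) (hL : 0 < L) (hε₀ : 0 < ε₀) :
    ∃ γ₀ : ℝ, 0 < γ₀ ∧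
      ∀ Q Γ : Set (EuclideanSpace ℝ (Fin n)),
        Bornology.IsBounded Q → MeasurableSet Q → Γ ⊆ closure Q →
        (∀ x ∈ Γ, ∀ r ∈ Set.Ioc (0 : ℝ) 1,
          c₀ * r ^ n ≤ (volume (Metric.ball x r ∩ Q)).toReal) →
      ∀ δ₀ : ℝ, 0 < δ₀ →
      ∀ η₀ η : EuclideanSpace ℝ (Fin n) → EuclideanSpace ℝ (Fin n),
        LipschitzOnWith (Real.toNNReal L) η₀ (closure Q) →
        LipschitzOnWith (Real.toNNReal L) η (closure Q) →
        (∀ x₀ ∈ Γ, ∀ x₁ ∈ Γ, δ₀ ≤ dist x₀ x₁ → ε₀ < dist (η₀ x₀) (η₀ x₁)) →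
        (∫ x in Q, ‖η x - η₀ x‖ ^ 2) ^ (1 / 2 : ℝ) < γ₀ →
        ∀ x₀ ∈ Γ, ∀ x₁ ∈ Γ, δ₀ ≤ dist x₀ x₁ → ε₀ / 2 < dist (η x₀) (η x₁) := by
  set r : ℝ := min 1 (ε₀ / (16 * L)) with hr_def
  have hr0 : 0 < r := lt_min one_pos (by positivity)
  have hr1 : r ≤ 1 := min_le_left _ _
  have hrL : L * r ≤ ε₀ / 16 := by
    have h : r ≤ ε₀ / (16 * L) := min_le_right _ _
    have : L * r ≤ L * (ε₀ / (16 * L)) := by nlinarith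
    calc L * r ≤ L * (ε₀ / (16 * L)) := this
      _ = ε₀ / 16 := by field_simp
  have hrn : 0 < c₀ * r ^ n := by positivity
  set γ₀ : ℝ := (ε₀ / 8) * Real.sqrt (c₀ * r ^ n) with hγ_def
  have hγ0 : 0 < γ₀ := by
    have := Real.sqrt_pos.mpr hrn
    positivity
  refine ⟨γ₀, hγ0, ?_⟩
  intro Q Γ hQb hQm hΓ hdens δ₀ hδ₀ η₀ η hη₀ hη hsep hclose x₀ hx₀ x₁ hx₁ hdist
  by_contra hcon
  push_neg at hcon
  have hLcoe : ((Real.toNNReal L : NNReal) : ℝ) = L := Real.coe_toNNReal L hL.le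
  have hx₀Q : x₀ ∈ closure Q := hΓ hx₀
  have hx₁Q : x₁ ∈ closure Q := hΓ hx₁
  have hη₀d : ∀ a ∈ closure Q, ∀ b ∈ closure Q, dist (η₀ a) (η₀ b) ≤ L * dist a b := by
    intro a ha b hb
    have := hη₀.dist_le_mul a ha b hb
    rwa [hLcoe] at this
  have hηd : ∀ a ∈ closure Q, ∀ b ∈ closure Q, dist (η a) (η b) ≤ L * dist a b := by
    intro a ha b hb
    have := hη.dist_le_mul a ha b hb
    rwa [hLcoe] at this
  -- key pointwise estimate
  have key : ∀ y ∈ ball x₀ r ∩ Q, ∀ z ∈ ball x₁ r ∩ Q,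
      ε₀ / 4 ≤ dist (η y) (η₀ y) + dist (η z) (η₀ z) := by
    intro y hy z hz
    have hyQ : y ∈ closure Q := subset_closure hy.2
    have hzQ : z ∈ closure Q := subset_closure hz.2
    have hy' : dist y x₀ < r := mem_ball.mp hy.1
    have hz' : dist z x₁ < r := mem_ball.mp hz.1
    have h1 : dist (η₀ x₀) (η₀ y) ≤ ε₀ / 16 := by
      have := hη₀d x₀ hx₀Q y hyQ
      have : dist (η₀ x₀) (η₀ y) ≤ L * dist x₀ y := this
      rw [dist_comm x₀ y] at this
      nlinarith
    have h2 : dist (η₀ z) (η₀ x₁) ≤ ε₀ / 16 := by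
      have := hη₀d z hzQ x₁ hx₁Q
      nlinarith
    have h3 : dist (η y) (η x₀) ≤ ε₀ / 16 := by
      have := hηd y hyQ x₀ hx₀Q
      nlinarith
    have h4 : dist (η x₁) (η z) ≤ ε₀ / 16 := by
      have := hηd x₁ hx₁Q z hzQ
      rw [dist_comm x₁ z] at this
      nlinarith
    have hsep' : ε₀ < dist (η₀ x₀) (η₀ x₁) := hsep x₀ hx₀ x₁ hx₁ hdist
    have t1 : dist (η₀ x₀) (η₀ x₁) ≤
        dist (η₀ x₀) (η₀ y) + dist (η₀ y) (η₀ z) + dist (η₀ z) (η₀ x₁) :=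
      dist_triangle4 _ _ _ _
    have t2 : dist (η₀ y) (η₀ z) ≤
        dist (η₀ y) (η y) + dist (η y) (η z) + dist (η z) (η₀ z) :=
      dist_triangle4 _ _ _ _
    have t3 : dist (η y) (η z) ≤
        dist (η y) (η x₀) + dist (η x₀) (η x₁) + dist (η x₁) (η z) :=
      dist_triangle4 _ _ _ _
    have c1 : dist (η₀ y) (η y) = dist (η y) (η₀ y) := dist_comm _ _
    have c2 : dist (η z) (η₀ z) = dist (η z) (η₀ z) := rfl
    linarith
  -- find a ball on which the displacement is uniformly large
  have main : ∃ x ∈ Γ, ∀ w ∈ ball x r ∩ Q, ε₀ / 8 ≤ dist (η w) (η₀ w) := by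
    by_cases hc : ∀ z ∈ ball x₁ r ∩ Q, ε₀ / 8 ≤ dist (η z) (η₀ z)
    · exact ⟨x₁, hx₁, hc⟩
    · push_neg at hc
      obtain ⟨z, hz, hzlt⟩ := hc
      refine ⟨x₀, hx₀, fun y hy => ?_⟩
      have := key y hy z hz
      linarith
  obtain ⟨x, hxΓ, hlow⟩ := main
  set S : Set (EuclideanSpace ℝ (Fin n)) := ball x r ∩ Q with hS_def
  have hvol : c₀ * r ^ n ≤ (volume S).toReal := hdens x hxΓ r ⟨hr0, hr1⟩
  have hSQ : S ⊆ Q := inter_subset_right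
  have hSm : MeasurableSet S := measurableSet_ball.inter hQm
  have hQfin : volume Q < ⊤ := hQb.measure_lt_top
  have hSfin : volume S ≠ ⊤ := (lt_of_le_of_lt (measure_mono hSQ) hQfin).ne
  -- integrability of the squared displacement on Q
  set g : EuclideanSpace ℝ (Fin n) → ℝ := fun x => ‖η x - η₀ x‖ ^ 2 with hg_def
  have hcontg : ContinuousOn g (closure Q) :=
    (((hη.continuousOn).sub (hη₀.continuousOn)).norm).pow 2
  have hmeasg : AEStronglyMeasurable g (volume.restrict Q) :=
    (hcontg.mono subset_closure).aestronglyMeasurable hQm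
  obtain ⟨R, hR⟩ := hQb.closure.subset_closedBall x₀
  have hbound : ∀ w ∈ Q, dist (η w) (η₀ w) ≤ dist (η x₀) (η₀ x₀) + 2 * (L * R) := by
    intro w hw
    have hwQ : w ∈ closure Q := subset_closure hw
    have hwR : dist w x₀ ≤ R := by simpa using hR hwQ
    have hb1 : dist (η w) (η x₀) ≤ L * R := by
      have := hηd w hwQ x₀ hx₀Q
      nlinarith
    have hb2 : dist (η₀ x₀) (η₀ w) ≤ L * R := by
      have := hη₀d x₀ hx₀Q w hwQ
      rw [dist_comm x₀ w] at this
      nlinarith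
    have t : dist (η w) (η₀ w) ≤ dist (η w) (η x₀) + dist (η x₀) (η₀ x₀) + dist (η₀ x₀) (η₀ w) :=
      dist_triangle4 _ _ _ _
    linarith
  set C : ℝ := dist (η x₀) (η₀ x₀) + 2 * (L * R) with hC_def
  have hC0 : 0 ≤ C := by
    have hxx : dist x₀ x₀ ≤ R := by simpa using hR hx₀Q
    have : (0:ℝ) ≤ R := by simpa using hxx
    positivity
  have hint : IntegrableOn g Q := by
    refine Integrable.mono' (g := fun _ => C ^ 2)
      ((integrableOn_const_iff (C := C ^ 2)).mpr (Or.inr hQfin)) hmeasg ?_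
    filter_upwards [ae_restrict_mem hQm] with w hw
    have h1 : ‖η w - η₀ w‖ ≤ C := by
      rw [← dist_eq_norm]; exact hbound w hw
    have h2 : (0:ℝ) ≤ ‖η w - η₀ w‖ := norm_nonneg _
    have hgw : g w = ‖η w - η₀ w‖ ^ 2 := rfl
    rw [hgw, Real.norm_eq_abs, abs_of_nonneg (by positivity)]
    exact pow_le_pow_left₀ h2 h1 2
  -- lower bound on the integral
  have hlow' : ∀ w ∈ S, (ε₀ / 8) ^ 2 ≤ g w := by
    intro w hw
    have := hlow w hw
    rw [dist_eq_norm] at this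
    have hgw : g w = ‖η w - η₀ w‖ ^ 2 := rfl
    rw [hgw]
    exact pow_le_pow_left₀ (by positivity) this 2
  have hI1 : (ε₀ / 8) ^ 2 * (volume S).toReal ≤ ∫ w in S, g w :=
    setIntegral_ge_of_const_le_real hSm hSfin hlow' (hint.mono_set hSQ)
  have hI2 : (∫ w in S, g w) ≤ ∫ w in Q, g w :=
    setIntegral_mono_set hint
      (Filter.Eventually.of_forall fun w => by
        have hgw : g w = ‖η w - η₀ w‖ ^ 2 := rfl
        rw [Pi.zero_apply, hgw]; positivity)
      (HasSubset.Subset.eventuallyLE hSQ)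
  have hvol' : (ε₀ / 8) ^ 2 * (c₀ * r ^ n) ≤ (ε₀ / 8) ^ 2 * (volume S).toReal :=
    mul_le_mul_of_nonneg_left hvol (by positivity)
  have hγsq : γ₀ ^ 2 = (ε₀ / 8) ^ 2 * (c₀ * r ^ n) := by
    rw [hγ_def, mul_pow, Real.sq_sqrt hrn.le]
  have hIlow : γ₀ ^ 2 ≤ ∫ w in Q, g w := by
    rw [hγsq]; linarith
  -- contradiction with the closeness hypothesis
  have hInonneg : 0 ≤ ∫ w in Q, g w :=
    integral_nonneg fun w => by
      have hgw : g w = ‖η w - η₀ w‖ ^ 2 := rfl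
      rw [hgw]; positivity
  have hsqrt : γ₀ ≤ Real.sqrt (∫ w in Q, g w) := by
    have := Real.sqrt_le_sqrt hIlow
    rwa [Real.sqrt_sq hγ0.le] at this
  rw [← Real.sqrt_eq_rpow] at hclose
  exact absurd hclose (not_lt.mpr hsqrt)
end

section
/- Let X be a real normed vector space, τ > 0, K ≥ 0, N ∈ ℕ, and let x_0, …, x_N ∈ X and real numbers E_0, …, E_N satisfy ‖x_{k+1} − x_k‖² ≤ 2τ·(E_k − E_{k+1} + τ·K) for every 0 ≤ k < N. Then for all 0 ≤ M ≤ N one has ‖x_N − x_M‖ ≤ √(τ·(N−M)) · √(2·(E_M − E_N + (N−M)·τ·K)). -/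
private lemma telescope_E (E : ℕ → ℝ) (M : ℕ) : ∀ N, M ≤ N →
    ∑ k ∈ Finset.Ico M N, (E k - E (k + 1)) = E M - E N := by
  intro N hMN
  induction N with
  | zero => simp_all
  | succ n ih =>
    rcases Nat.lt_or_ge M (n + 1) with hlt | hge
    · have hMn : M ≤ n := Nat.lt_succ_iff.mp hlt
      rw [Finset.sum_Ico_succ_top hMn, ih hMn]; ring
    · have : M = n + 1 := le_antisymm hMN hge
      simp [this]

private lemma telescope_x {X : Type*} [NormedAddCommGroup X] (x : ℕ → X) (M : ℕ) : ∀ N, M ≤ N →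
    ∑ k ∈ Finset.Ico M N, (x (k + 1) - x k) = x N - x M := by
  intro N hMN
  induction N with
  | zero => simp_all
  | succ n ih =>
    rcases Nat.lt_or_ge M (n + 1) with hlt | hge
    · have hMn : M ≤ n := Nat.lt_succ_iff.mp hlt
      rw [Finset.sum_Ico_succ_top hMn, ih hMn]; abel
    · have : M = n + 1 := le_antisymm hMN hge
      simp [this]

/-- **Abstract telescoping/Cauchy–Schwarz estimate** behind the uniform `1/2`-Hölder
continuity in time of the minimizing-movements interpolants (paper, Section 2.2). -/
theorem telescoping_hoelder_estimate {X : Type*} [NormedAddCommGroup X] [NormedSpace ℝ X]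
    (τ K : ℝ) (hτ : 0 < τ) (hK : 0 ≤ K) (N : ℕ) (x : ℕ → X) (E : ℕ → ℝ)
    (h : ∀ k < N, ‖x (k + 1) - x k‖ ^ 2 ≤ 2 * τ * (E k - E (k + 1) + τ * K)) :
    ∀ M ≤ N, ‖x N - x M‖ ≤
      Real.sqrt (τ * ((N : ℝ) - (M : ℝ))) *
        Real.sqrt (2 * (E M - E N + ((N : ℝ) - (M : ℝ)) * τ * K)) := by
  intro M hMN
  set s := Finset.Ico M N with hs
  have hcard : (s.card : ℝ) = (N : ℝ) - (M : ℝ) := by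
    rw [hs, Nat.card_Ico]; push_cast [Nat.sub_add_cancel hMN, hMN]; ring
  -- sum of squares bound
  have hsum : ∑ k ∈ s, ‖x (k + 1) - x k‖ ^ 2 ≤
      2 * τ * (E M - E N + ((N : ℝ) - (M : ℝ)) * τ * K) := by
    calc ∑ k ∈ s, ‖x (k + 1) - x k‖ ^ 2
        ≤ ∑ k ∈ s, (2 * τ * (E k - E (k + 1) + τ * K)) := by
          refine Finset.sum_le_sum fun k hk => h k ?_
          exact (Finset.mem_Ico.mp hk).2
      _ = 2 * τ * (E M - E N + ((N : ℝ) - (M : ℝ)) * τ * K) := by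
          rw [← Finset.mul_sum, Finset.sum_add_distrib, Finset.sum_const,
            telescope_E E M N hMN, nsmul_eq_mul, hcard]
          ring
  -- triangle inequality
  have htri : ‖x N - x M‖ ≤ ∑ k ∈ s, ‖x (k + 1) - x k‖ := by
    rw [← telescope_x x M N hMN]
    exact norm_sum_le _ _
  -- Cauchy–Schwarz
  have hcs : (∑ k ∈ s, ‖x (k + 1) - x k‖) ^ 2 ≤
      (s.card : ℝ) * ∑ k ∈ s, ‖x (k + 1) - x k‖ ^ 2 := sq_sum_le_card_mul_sum_sq
  have hn : (0 : ℝ) ≤ (N : ℝ) - (M : ℝ) := by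
    have := hcard ▸ (Nat.cast_nonneg s.card); linarith [hcard ▸ (Nat.cast_nonneg s.card : (0:ℝ) ≤ s.card)]
  have hsum0 : (0 : ℝ) ≤ ∑ k ∈ s, ‖x (k + 1) - x k‖ ^ 2 :=
    Finset.sum_nonneg fun k _ => sq_nonneg _
  have hS : (0 : ℝ) ≤ 2 * (E M - E N + ((N : ℝ) - (M : ℝ)) * τ * K) := by
    nlinarith
  have key : ‖x N - x M‖ ^ 2 ≤
      (τ * ((N : ℝ) - (M : ℝ))) * (2 * (E M - E N + ((N : ℝ) - (M : ℝ)) * τ * K)) := by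
    have h1 : ‖x N - x M‖ ^ 2 ≤ (∑ k ∈ s, ‖x (k + 1) - x k‖) ^ 2 := by
      apply pow_le_pow_left₀ (norm_nonneg _) htri
    calc ‖x N - x M‖ ^ 2 ≤ (∑ k ∈ s, ‖x (k + 1) - x k‖) ^ 2 := h1
      _ ≤ (s.card : ℝ) * ∑ k ∈ s, ‖x (k + 1) - x k‖ ^ 2 := hcs
      _ ≤ ((N : ℝ) - (M : ℝ)) * (2 * τ * (E M - E N + ((N : ℝ) - (M : ℝ)) * τ * K)) := by
          rw [hcard]; exact mul_le_mul_of_nonneg_left hsum hn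
      _ = (τ * ((N : ℝ) - (M : ℝ))) * (2 * (E M - E N + ((N : ℝ) - (M : ℝ)) * τ * K)) := by
          ring
  rw [← Real.sqrt_mul (by positivity)]
  rw [← Real.sqrt_sq (norm_nonneg (x N - x M))]
  exact Real.sqrt_le_sqrt key
end

section
/- For every n ≥ 1 and every K ≥ 0 there exists τ₀ > 0, depending only on n and K, with the following property: for every τ ∈ (0, τ₀], every N ∈ ℕ and all real n×n matrices A_1, …, A_N with trace(A_k) = 0 for each k and Σ_{k=1}^{N} τ·‖A_k‖² ≤ K, one has 1/2 ≤ Π_{k=1}^{N} det(1 + τ·A_k) ≤ 2. -/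
/-- The Frobenius norm of a real `n×n` matrix. -/
noncomputable def frobNorm {n : ℕ} (A : Matrix (Fin n) (Fin n) ℝ) : ℝ :=
  Real.sqrt (∑ i, ∑ j, A i j ^ 2)

lemma frobNorm_nonneg {n : ℕ} (A : Matrix (Fin n) (Fin n) ℝ) : 0 ≤ frobNorm A :=
  Real.sqrt_nonneg _

lemma frobNorm_sq {n : ℕ} (A : Matrix (Fin n) (Fin n) ℝ) :
    frobNorm A ^ 2 = ∑ i, ∑ j, A i j ^ 2 := by
  rw [frobNorm, Real.sq_sqrt]
  exact Finset.sum_nonneg fun i _ => Finset.sum_nonneg fun j _ => sq_nonneg _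

lemma abs_entry_le {n : ℕ} (A : Matrix (Fin n) (Fin n) ℝ) (i j : Fin n) :
    |A i j| ≤ frobNorm A := by
  have h1 : A i j ^ 2 ≤ ∑ i', ∑ j', A i' j' ^ 2 := by
    calc A i j ^ 2 ≤ ∑ j', A i j' ^ 2 :=
          Finset.single_le_sum (f := fun j' => A i j' ^ 2)
            (fun j' _ => sq_nonneg _) (Finset.mem_univ j)
    _ ≤ ∑ i', ∑ j', A i' j' ^ 2 :=
          Finset.single_le_sum (f := fun i' => ∑ j', A i' j' ^ 2)
            (fun i' _ => Finset.sum_nonneg fun j' _ => sq_nonneg _) (Finset.mem_univ i)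
  calc |A i j| = Real.sqrt (A i j ^ 2) := (Real.sqrt_sq_eq_abs _).symm
  _ ≤ frobNorm A := Real.sqrt_le_sqrt h1

lemma frobNorm_smul {n : ℕ} (t : ℝ) (A : Matrix (Fin n) (Fin n) ℝ) :
    frobNorm (t • A) = |t| * frobNorm A := by
  unfold frobNorm
  have : ∀ i j : Fin n, (t • A) i j ^ 2 = t ^ 2 * A i j ^ 2 := by
    intro i j; simp [Matrix.smul_apply, mul_pow]
  simp_rw [this, ← Finset.mul_sum]
  rw [Real.sqrt_mul (sq_nonneg t), Real.sqrt_sq_eq_abs]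

lemma prod_one_add_bound {ι : Type*} (s : Finset ι) (f : ι → ℝ) (ε : ℝ)
    (hε0 : 0 ≤ ε) (hε1 : ε ≤ 1) (hf : ∀ i ∈ s, |f i| ≤ ε) :
    |∏ i ∈ s, (1 + f i) - 1 - ∑ i ∈ s, f i| ≤ 3 ^ s.card * ε ^ 2 := by
  induction s using Finset.cons_induction with
  | empty => simp [sq_nonneg, mul_nonneg, pow_nonneg hε0]
  | cons a t ha ih =>
    have hfa : |f a| ≤ ε := hf a (Finset.mem_cons_self a t)
    have ih' := ih fun i hi => hf i (Finset.mem_cons_of_mem hi)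
    rw [Finset.prod_cons, Finset.sum_cons, Finset.card_cons]
    set P := ∏ i ∈ t, (1 + f i)
    set S := ∑ i ∈ t, f i
    have key : (1 + f a) * P - 1 - (f a + S) = (1 + f a) * (P - 1 - S) + f a * S := by
      ring
    rw [key]
    have hS : |S| ≤ t.card * ε := by
      calc |S| ≤ ∑ i ∈ t, |f i| := Finset.abs_sum_le_sum_abs _ _
      _ ≤ ∑ _i ∈ t, ε := Finset.sum_le_sum fun i hi => hf i (Finset.mem_cons_of_mem hi)
      _ = t.card * ε := by rw [Finset.sum_const, nsmul_eq_mul]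
    have h1 : |(1 + f a) * (P - 1 - S)| ≤ 2 * (3 ^ t.card * ε ^ 2) := by
      rw [abs_mul]
      have : |1 + f a| ≤ 2 := by
        calc |1 + f a| ≤ |(1:ℝ)| + |f a| := abs_add_le _ _
        _ ≤ 1 + 1 := by rw [abs_one]; linarith
        _ = 2 := by norm_num
      exact mul_le_mul this ih' (abs_nonneg _) (by norm_num)
    have h2 : |f a * S| ≤ t.card * ε ^ 2 := by
      rw [abs_mul, sq]
      calc |f a| * |S| ≤ ε * (t.card * ε) :=
            mul_le_mul hfa hS (abs_nonneg _) hε0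
      _ = t.card * (ε * ε) := by ring
    have hcard : (t.card : ℝ) ≤ 3 ^ t.card := by
      calc (t.card : ℝ) ≤ 2 ^ t.card := by exact_mod_cast (Nat.lt_two_pow_self (n := t.card)).le
      _ ≤ 3 ^ t.card := by
        apply pow_le_pow_left₀ (by norm_num) (by norm_num)
    calc |(1 + f a) * (P - 1 - S) + f a * S|
        ≤ |(1 + f a) * (P - 1 - S)| + |f a * S| := abs_add_le _ _
    _ ≤ 2 * (3 ^ t.card * ε ^ 2) + t.card * ε ^ 2 := add_le_add h1 h2
    _ ≤ 3 ^ (t.card + 1) * ε ^ 2 := by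
        have h3 : (3:ℝ) ^ (t.card + 1) = 3 ^ t.card * 3 := pow_succ 3 t.card
        nlinarith [hcard, sq_nonneg ε]

lemma perm_term_bound {n : ℕ} (B : Matrix (Fin n) (Fin n) ℝ) (ε : ℝ)
    (hε0 : 0 ≤ ε) (hε1 : ε ≤ 1) (hB : ∀ i j, |B i j| ≤ ε)
    (σ : Equiv.Perm (Fin n)) (hσ : σ ≠ 1) :
    |∏ i, (1 + B) (σ i) i| ≤ 2 ^ n * ε ^ 2 := by
  set m : Fin n → ℝ := fun i => (1 + B) (σ i) i with hm
  have hbound : ∀ i, |m i| ≤ 2 := by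
    intro i
    by_cases h : σ i = i
    · have : m i = 1 + B i i := by
        show (1 + B) (σ i) i = 1 + B i i
        rw [h, Matrix.add_apply, Matrix.one_apply_eq]
      rw [this]
      calc |1 + B i i| ≤ |(1:ℝ)| + |B i i| := abs_add_le _ _
      _ ≤ 1 + 1 := by have := hB i i; rw [abs_one]; linarith
      _ = 2 := by norm_num
    · have : m i = B (σ i) i := by
        simp [hm, Matrix.add_apply, Matrix.one_apply_ne h]
      rw [this]
      exact (hB _ _).trans (by linarith)
  obtain ⟨i, hi⟩ : ∃ i, σ i ≠ i := by
    by_contra h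
    push_neg at h
    exact hσ (Equiv.ext fun x => h x)
  set j := σ i with hj
  have hji : j ≠ i := hi
  have hjfix : σ j ≠ j := by
    intro h
    exact hji (σ.injective (by rw [h, ← hj]))
  have hmi : |m i| ≤ ε := by
    have : m i = B (σ i) i := by simp [hm, Matrix.add_apply, Matrix.one_apply_ne (show σ i ≠ i from hi)]
    rw [this]; exact hB _ _
  have hmj : |m j| ≤ ε := by
    have : m j = B (σ j) j := by simp [hm, Matrix.add_apply, Matrix.one_apply_ne hjfix]
    rw [this]; exact hB _ _
  have habs : |∏ x, m x| = ∏ x, |m x| := by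
    rw [Finset.abs_prod]
  rw [habs]
  have hj_mem : j ∈ Finset.univ.erase i := Finset.mem_erase.mpr ⟨hji, Finset.mem_univ j⟩
  have e1 : ∏ x, |m x| = |m i| * ∏ x ∈ Finset.univ.erase i, |m x| :=
    (Finset.mul_prod_erase _ _ (Finset.mem_univ i)).symm
  have e2 : ∏ x ∈ Finset.univ.erase i, |m x|
      = |m j| * ∏ x ∈ (Finset.univ.erase i).erase j, |m x| :=
    (Finset.mul_prod_erase _ _ hj_mem).symm
  have hrest : ∏ x ∈ (Finset.univ.erase i).erase j, |m x| ≤ 2 ^ n := by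
    calc ∏ x ∈ (Finset.univ.erase i).erase j, |m x|
        ≤ ∏ _x ∈ (Finset.univ.erase i).erase j, (2:ℝ) :=
          Finset.prod_le_prod (fun x _ => abs_nonneg _) (fun x _ => hbound x)
    _ = 2 ^ ((Finset.univ.erase i).erase j).card := by rw [Finset.prod_const]
    _ ≤ 2 ^ n := by
        apply pow_le_pow_right₀ (by norm_num)
        calc ((Finset.univ.erase i).erase j).card ≤ (Finset.univ : Finset (Fin n)).card :=
              Finset.card_le_card ((Finset.erase_subset _ _).trans (Finset.erase_subset _ _))
        _ = n := by simp
  have hrest0 : 0 ≤ ∏ x ∈ (Finset.univ.erase i).erase j, |m x| :=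
    Finset.prod_nonneg fun x _ => abs_nonneg _
  rw [e1, e2]
  calc |m i| * (|m j| * ∏ x ∈ (Finset.univ.erase i).erase j, |m x|)
      ≤ ε * (ε * 2 ^ n) := by
        apply mul_le_mul hmi _ (mul_nonneg (abs_nonneg _) hrest0) hε0
        exact mul_le_mul hmj hrest hrest0 hε0
  _ = 2 ^ n * ε ^ 2 := by ring

lemma det_one_add_bound {n : ℕ} (B : Matrix (Fin n) (Fin n) ℝ)
    (htr : B.trace = 0) (hε1 : frobNorm B ≤ 1) :
    |(1 + B).det - 1| ≤ ((3:ℝ) ^ n + n.factorial * 2 ^ n) * frobNorm B ^ 2 := by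
  set ε := frobNorm B with hε
  have hε0 : 0 ≤ ε := frobNorm_nonneg B
  have hB : ∀ i j, |B i j| ≤ ε := fun i j => abs_entry_le B i j
  set f : Equiv.Perm (Fin n) → ℝ :=
    fun σ => ((Equiv.Perm.sign σ : ℤ) : ℝ) * ∏ i, (1 + B) (σ i) i with hf
  have hdet : (1 + B).det = ∑ σ, f σ := Matrix.det_apply' (1 + B)
  have hsplit : (∑ σ, f σ) = f 1 + ∑ σ ∈ Finset.univ.erase 1, f σ :=
    (Finset.add_sum_erase _ f (Finset.mem_univ 1)).symm
  have hf1 : f 1 = ∏ i, (1 + B i i) := by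
    simp only [hf, Equiv.Perm.sign_one, Units.val_one, Int.cast_one, one_mul]
    apply Finset.prod_congr rfl
    intro i _
    rw [Equiv.Perm.one_apply, Matrix.add_apply, Matrix.one_apply_eq]
  have htrace : (∑ i, B i i) = 0 := htr
  have hid : |f 1 - 1| ≤ 3 ^ n * ε ^ 2 := by
    have := prod_one_add_bound Finset.univ (fun i => B i i) ε hε0 hε1
      (fun i _ => hB i i)
    rw [htrace, Finset.card_univ, Fintype.card_fin] at this
    simpa [hf1] using this
  have hterm : ∀ σ ∈ Finset.univ.erase (1 : Equiv.Perm (Fin n)), |f σ| ≤ 2 ^ n * ε ^ 2 := by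
    intro σ hσ
    have hσ1 : σ ≠ 1 := (Finset.mem_erase.mp hσ).1
    have habs : |f σ| = |∏ i, (1 + B) (σ i) i| := by
      rw [hf, abs_mul]
      have : |((Equiv.Perm.sign σ : ℤ) : ℝ)| = 1 := by
        rcases Int.units_eq_one_or (Equiv.Perm.sign σ) with h | h <;> simp [h]
      rw [this, one_mul]
    rw [habs]
    exact perm_term_bound B ε hε0 hε1 hB σ hσ1
  have hrest : |∑ σ ∈ Finset.univ.erase 1, f σ| ≤ (n.factorial : ℝ) * (2 ^ n * ε ^ 2) := by
    calc |∑ σ ∈ Finset.univ.erase 1, f σ| ≤ ∑ σ ∈ Finset.univ.erase 1, |f σ| :=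
          Finset.abs_sum_le_sum_abs _ _
    _ ≤ ∑ _σ ∈ Finset.univ.erase (1 : Equiv.Perm (Fin n)), (2 ^ n * ε ^ 2) :=
          Finset.sum_le_sum hterm
    _ = (Finset.univ.erase (1 : Equiv.Perm (Fin n))).card * (2 ^ n * ε ^ 2) := by
          rw [Finset.sum_const, nsmul_eq_mul]
    _ ≤ (n.factorial : ℝ) * (2 ^ n * ε ^ 2) := by
          apply mul_le_mul_of_nonneg_right _ (by positivity)
          have h1 : (Finset.univ.erase (1 : Equiv.Perm (Fin n))).card
              ≤ (Finset.univ : Finset (Equiv.Perm (Fin n))).card :=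
            Finset.card_le_card (Finset.erase_subset _ _)
          have h2 : (Finset.univ : Finset (Equiv.Perm (Fin n))).card = n.factorial := by
            rw [Finset.card_univ, Fintype.card_perm, Fintype.card_fin]
          exact_mod_cast h2 ▸ h1
  calc |(1 + B).det - 1| = |(f 1 - 1) + ∑ σ ∈ Finset.univ.erase 1, f σ| := by
        rw [hdet, hsplit]; ring_nf
  _ ≤ |f 1 - 1| + |∑ σ ∈ Finset.univ.erase 1, f σ| := abs_add_le _ _
  _ ≤ 3 ^ n * ε ^ 2 + (n.factorial : ℝ) * (2 ^ n * ε ^ 2) := add_le_add hid hrest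
  _ = ((3:ℝ) ^ n + n.factorial * 2 ^ n) * ε ^ 2 := by ring

lemma exp_neg_two_le {x : ℝ} (hx0 : 0 ≤ x) (hx : x ≤ 1/2) :
    Real.exp (-(2 * x)) ≤ 1 - x := by
  have h1 : 1 + 2 * x ≤ Real.exp (2 * x) := by
    have := Real.add_one_le_exp (2 * x); linarith
  have h2 : 0 < Real.exp (2 * x) := Real.exp_pos _
  have h3 : Real.exp (-(2 * x)) = (Real.exp (2 * x))⁻¹ := by
    rw [Real.exp_neg]
  rw [h3]
  rw [inv_le_iff_one_le_mul₀ h2]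
  nlinarith [h1, h2]

/-- **Almost volume preservation of the discrete flow map** (paper, Section 4.1):
for traceless matrices `A_k` with `∑ τ ‖A_k‖² ≤ K` and `τ ≤ τ₀(n, K)`, the product of
the determinants `det(1 + τ A_k)` lies in `[1/2, 2]`. -/
theorem det_product_bound (n : ℕ) (hn : 1 ≤ n) (K : ℝ) (hK : 0 ≤ K) :
    ∃ τ₀ : ℝ, 0 < τ₀ ∧
      ∀ τ : ℝ, 0 < τ → τ ≤ τ₀ → ∀ N : ℕ, ∀ A : Fin N → Matrix (Fin n) (Fin n) ℝ,
        (∀ k, (A k).trace = 0) →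
        (∑ k, τ * frobNorm (A k) ^ 2) ≤ K →
        1 / 2 ≤ (∏ k, (1 + τ • A k).det) ∧ (∏ k, (1 + τ • A k).det) ≤ 2 := by
  set C : ℝ := (3:ℝ) ^ n + n.factorial * 2 ^ n with hC
  have hC1 : 1 ≤ C := by
    have h1 : (1:ℝ) ≤ 3 ^ n := one_le_pow₀ (by norm_num)
    have h2 : (0:ℝ) ≤ (n.factorial : ℝ) * 2 ^ n := by positivity
    rw [hC]; linarith
  have hlog2 : 0 < Real.log 2 := Real.log_pos (by norm_num)
  refine ⟨min (1 / (K + 1)) (Real.log 2 / (4 * C * (K + 1))), ?_, ?_⟩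
  · apply lt_min
    · positivity
    · apply div_pos hlog2
      positivity
  intro τ hτ0 hττ N A htr hsum
  have hτ1 : τ ≤ 1 / (K + 1) := hττ.trans (min_le_left _ _)
  have hτ2 : τ ≤ Real.log 2 / (4 * C * (K + 1)) := hττ.trans (min_le_right _ _)
  -- each term of the sum is ≤ K
  have hterm : ∀ k : Fin N, τ * frobNorm (A k) ^ 2 ≤ K := by
    intro k
    refine le_trans ?_ hsum
    apply Finset.single_le_sum (f := fun k => τ * frobNorm (A k) ^ 2)
      (fun i _ => by positivity) (Finset.mem_univ k)
  -- properties of B k = τ • A k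
  have hfrobB : ∀ k, frobNorm (τ • A k) = τ * frobNorm (A k) := by
    intro k; rw [frobNorm_smul, abs_of_pos hτ0]
  have hεsq : ∀ k, frobNorm (τ • A k) ^ 2 ≤ τ * K := by
    intro k
    rw [hfrobB k, mul_pow]
    calc τ ^ 2 * frobNorm (A k) ^ 2 = τ * (τ * frobNorm (A k) ^ 2) := by ring
    _ ≤ τ * K := mul_le_mul_of_nonneg_left (hterm k) hτ0.le
  have hτK : τ * K < 1 := by
    have : τ * (K + 1) ≤ 1 := by
      rw [div_eq_mul_inv, one_mul] at hτ1
      calc τ * (K + 1) ≤ (K + 1)⁻¹ * (K + 1) := mul_le_mul_of_nonneg_right hτ1 (by linarith)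
      _ = 1 := by field_simp
    nlinarith
  have hε1 : ∀ k, frobNorm (τ • A k) ≤ 1 := by
    intro k
    have h1 := hεsq k
    have h2 := frobNorm_nonneg (τ • A k)
    nlinarith
  have htrB : ∀ k, (τ • A k).trace = 0 := by
    intro k; rw [Matrix.trace_smul, htr k, smul_zero]
  -- det bounds
  set x : Fin N → ℝ := fun k => C * frobNorm (τ • A k) ^ 2 with hx
  have hx0 : ∀ k, 0 ≤ x k := by
    intro k
    have := frobNorm_nonneg (τ • A k)
    positivity
  have hdet : ∀ k, |(1 + τ • A k).det - 1| ≤ x k := fun k =>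
    det_one_add_bound (τ • A k) (htrB k) (hε1 k)
  -- sum of x bounded
  have hCτ : 4 * C * (K + 1) * τ ≤ Real.log 2 := by
    rw [div_eq_mul_inv] at hτ2
    have hpos : (0:ℝ) < 4 * C * (K + 1) := by positivity
    calc 4 * C * (K + 1) * τ ≤ 4 * C * (K + 1) * (Real.log 2 * (4 * C * (K + 1))⁻¹) :=
          mul_le_mul_of_nonneg_left hτ2 hpos.le
    _ = Real.log 2 := by field_simp
  have hxsum : ∑ k, x k ≤ Real.log 2 / 4 := by
    have e1 : ∑ k, x k = C * τ * ∑ k, τ * frobNorm (A k) ^ 2 := by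
      rw [Finset.mul_sum]
      apply Finset.sum_congr rfl
      intro k _
      show C * frobNorm (τ • A k) ^ 2 = C * τ * (τ * frobNorm (A k) ^ 2)
      rw [hfrobB k]; ring
    rw [e1]
    have h2 : C * τ * ∑ k, τ * frobNorm (A k) ^ 2 ≤ C * τ * K :=
      mul_le_mul_of_nonneg_left hsum (by positivity)
    refine h2.trans ?_
    nlinarith [hCτ, mul_pos hτ0 (lt_of_lt_of_le one_pos hC1)]
  have hlog1 : Real.log 2 < 1 := by
    have := Real.log_two_lt_d9; linarith
  have hxk : ∀ k, x k ≤ 1/2 := by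
    intro k
    calc x k ≤ ∑ j, x j :=
          Finset.single_le_sum (fun j _ => hx0 j) (Finset.mem_univ k)
    _ ≤ Real.log 2 / 4 := hxsum
    _ ≤ 1/2 := by linarith
  have hlower : ∀ k, Real.exp (-(2 * x k)) ≤ (1 + τ • A k).det := by
    intro k
    have h1 := (abs_le.mp (hdet k)).1
    have := exp_neg_two_le (hx0 k) (hxk k)
    linarith
  have hupper : ∀ k, (1 + τ • A k).det ≤ Real.exp (x k) := by
    intro k
    have h1 := (abs_le.mp (hdet k)).2
    have h2 := Real.add_one_le_exp (x k)
    linarith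
  constructor
  · calc (1:ℝ) / 2 = Real.exp (-Real.log 2) := by
          rw [Real.exp_neg, Real.exp_log (by norm_num : (0:ℝ) < 2)]; norm_num
    _ ≤ Real.exp (∑ k, -(2 * x k)) := by
          apply Real.exp_le_exp.mpr
          have hs : (∑ k : Fin N, -(2 * x k)) = -(2 * ∑ k, x k) := by
            rw [Finset.sum_neg_distrib, Finset.mul_sum]
          rw [hs]
          linarith [hxsum]
    _ = ∏ k, Real.exp (-(2 * x k)) := Real.exp_sum _ _
    _ ≤ ∏ k, (1 + τ • A k).det :=
          Finset.prod_le_prod (fun k _ => (Real.exp_pos _).le) (fun k _ => hlower k)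
  · calc (∏ k, (1 + τ • A k).det) ≤ ∏ k, Real.exp (x k) :=
          Finset.prod_le_prod (fun k _ => (Real.exp_pos _).le.trans (hlower k))
            (fun k _ => hupper k)
    _ = Real.exp (∑ k, x k) := (Real.exp_sum _ _).symm
    _ ≤ Real.exp (Real.log 2) := Real.exp_le_exp.mpr (hxsum.trans (by linarith))
    _ = 2 := Real.exp_log (by norm_num)
end

section
/- For every n ≥ 1 there is a constant c_n > 0, depending only on n, with the following property: let Q ⊆ ℝⁿ be open and bounded, let ε₀ > 0 and M ≥ 0, let η : Q → ℝⁿ be an injective continuously differentiable map with det Dη(x) ≥ ε₀ and ‖Dη(x)‖ ≤ M for all x ∈ Q, and let u : η(Q) → ℝⁿ be continuously differentiable. Then, with b := u ∘ η, one has ∫_{η(Q)} ‖Du(y)‖² dy ≤ c_n·(M^{2n−2}/ε₀)·∫_Q ‖Db(x)‖² dx. -/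
open MeasureTheory

/-- The Frobenius norm of a continuous linear map between Euclidean spaces,
viewed as a matrix in the standard bases. -/
noncomputable def clmFrob {n m : ℕ}
    (f : EuclideanSpace ℝ (Fin n) →L[ℝ] EuclideanSpace ℝ (Fin m)) : ℝ :=
  Real.sqrt (∑ j, ‖f (EuclideanSpace.single j 1)‖ ^ 2)

variable {n m k : ℕ}

lemma clmFrob_nonneg (f : EuclideanSpace ℝ (Fin n) →L[ℝ] EuclideanSpace ℝ (Fin m)) :
    0 ≤ clmFrob f := Real.sqrt_nonneg _

lemma sq_clmFrob (f : EuclideanSpace ℝ (Fin n) →L[ℝ] EuclideanSpace ℝ (Fin m)) :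
    clmFrob f ^ 2 = ∑ j, ‖f (EuclideanSpace.single j 1)‖ ^ 2 :=
  Real.sq_sqrt (Finset.sum_nonneg fun _ _ => sq_nonneg _)

lemma norm_le_clmFrob (f : EuclideanSpace ℝ (Fin n) →L[ℝ] EuclideanSpace ℝ (Fin m))
    (j : Fin n) : ‖f (EuclideanSpace.single j 1)‖ ≤ clmFrob f := by
  rw [clmFrob, ← Real.sqrt_sq (norm_nonneg (f (EuclideanSpace.single j 1)))]
  exact Real.sqrt_le_sqrt (Finset.single_le_sum (f := fun j => ‖f (EuclideanSpace.single j 1)‖ ^ 2)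
    (fun _ _ => sq_nonneg _) (Finset.mem_univ j))

lemma norm_apply_le_clmFrob (f : EuclideanSpace ℝ (Fin n) →L[ℝ] EuclideanSpace ℝ (Fin m))
    (x : EuclideanSpace ℝ (Fin n)) : ‖f x‖ ≤ clmFrob f * ‖x‖ := by
  have hx : x = ∑ j, x j • EuclideanSpace.single j 1 := by
    have := (EuclideanSpace.basisFun (Fin n) ℝ).sum_repr x
    simpa [EuclideanSpace.basisFun_apply, EuclideanSpace.basisFun_repr] using this.symm
  have h1 : ‖f x‖ ≤ ∑ j, |x j| * ‖f (EuclideanSpace.single j 1)‖ := by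
    conv_lhs => rw [hx]
    rw [map_sum]
    refine (norm_sum_le _ _).trans ?_
    refine Finset.sum_le_sum fun j _ => ?_
    rw [_root_.map_smul, norm_smul, Real.norm_eq_abs]
  refine h1.trans ?_
  have h2 := Finset.sum_mul_sq_le_sq_mul_sq Finset.univ (fun j => |x j|)
    (fun j => ‖f (EuclideanSpace.single j 1)‖)
  have h3 : (∑ j, |x j| * ‖f (EuclideanSpace.single j 1)‖) ^ 2 ≤ (clmFrob f * ‖x‖)^2 := by
    rw [mul_pow, EuclideanSpace.norm_eq, sq_clmFrob,
      Real.sq_sqrt (Finset.sum_nonneg fun _ _ => sq_nonneg _)]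
    rw [mul_comm]
    simpa using h2
  exact (pow_le_pow_iff_left₀ (Finset.sum_nonneg fun _ _ =>
    mul_nonneg (abs_nonneg _) (norm_nonneg _))
    (mul_nonneg (clmFrob_nonneg f) (norm_nonneg x)) two_ne_zero).mp h3

lemma clmFrob_comp_le (f : EuclideanSpace ℝ (Fin m) →L[ℝ] EuclideanSpace ℝ (Fin k))
    (g : EuclideanSpace ℝ (Fin n) →L[ℝ] EuclideanSpace ℝ (Fin m)) :
    clmFrob (f.comp g) ≤ clmFrob f * clmFrob g := by
  have h : clmFrob (f.comp g) ^ 2 ≤ (clmFrob f * clmFrob g) ^ 2 := by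
    rw [sq_clmFrob, mul_pow, sq_clmFrob g, Finset.mul_sum]
    refine Finset.sum_le_sum fun j _ => ?_
    calc ‖(f.comp g) (EuclideanSpace.single j 1)‖ ^ 2
        ≤ (clmFrob f * ‖g (EuclideanSpace.single j 1)‖) ^ 2 :=
          pow_le_pow_left₀ (norm_nonneg _) (norm_apply_le_clmFrob f _) 2
      _ = clmFrob f ^ 2 * ‖g (EuclideanSpace.single j 1)‖ ^ 2 := by ring
  exact (pow_le_pow_iff_left₀ (clmFrob_nonneg _)
    (mul_nonneg (clmFrob_nonneg _) (clmFrob_nonneg _)) two_ne_zero).mp h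

lemma entry_abs_le_clmFrob (f : EuclideanSpace ℝ (Fin n) →L[ℝ] EuclideanSpace ℝ (Fin m))
    (i : Fin m) (j : Fin n) : |f (EuclideanSpace.single j 1) i| ≤ clmFrob f := by
  refine le_trans ?_ (norm_le_clmFrob f j)
  set v := f (EuclideanSpace.single j 1)
  rw [EuclideanSpace.norm_eq, ← Real.sqrt_sq_eq_abs]
  exact Real.sqrt_le_sqrt (Finset.single_le_sum (f := fun i => ‖v i‖ ^ 2)
    (fun _ _ => sq_nonneg _) (Finset.mem_univ i) |>.trans_eq' (by rw [Real.norm_eq_abs, sq_abs]))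

variable {n : ℕ}

lemma adjugate_entry_bound (A : Matrix (Fin n) (Fin n) ℝ) (M : ℝ) (hM : 0 ≤ M)
    (hA : ∀ i j, |A i j| ≤ M) (i j : Fin n) :
    |A.adjugate i j| ≤ (Nat.factorial n : ℝ) * M ^ (n - 1) := by
  rw [Matrix.adjugate_apply, Matrix.det_apply]
  set B := A.updateRow j (Pi.single i 1) with hB
  refine (Finset.abs_sum_le_sum_abs _ _).trans ?_
  have key : ∀ σ : Equiv.Perm (Fin n), |Equiv.Perm.sign σ • ∏ k, B (σ k) k| ≤ M ^ (n - 1) := by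
    intro σ
    have h1 : |Equiv.Perm.sign σ • ∏ k, B (σ k) k| = ∏ k, |B (σ k) k| := by
      rcases Int.units_eq_one_or σ.sign with h | h <;>
        simp [h, Finset.abs_prod]
    rw [h1]
    set k₀ := σ⁻¹ j with hk₀
    have hσk₀ : σ k₀ = j := by simp [hk₀]
    rw [← Finset.prod_erase_mul _ _ (Finset.mem_univ k₀)]
    have h2 : ∏ k ∈ Finset.univ.erase k₀, |B (σ k) k| ≤ M ^ (n - 1) := by
      have hcard : (Finset.univ.erase k₀).card = n - 1 := by
        simp [Finset.card_erase_of_mem]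
      rw [← hcard, ← Finset.prod_const]
      refine Finset.prod_le_prod (fun _ _ => abs_nonneg _) fun k hk => ?_
      have hkj : σ k ≠ j := by
        intro h
        exact (Finset.mem_erase.mp hk).1 (by rw [hk₀, ← h]; exact (σ.symm_apply_apply k).symm)
      rw [hB, Matrix.updateRow_ne hkj]
      exact hA _ _
    have h3 : |B (σ k₀) k₀| ≤ 1 := by
      rw [hσk₀, hB, Matrix.updateRow_self]
      rcases eq_or_ne k₀ i with h | h <;> simp [Pi.single_apply, h]
    calc (∏ k ∈ Finset.univ.erase k₀, |B (σ k) k|) * |B (σ k₀) k₀|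
        ≤ M ^ (n-1) * 1 := by
          refine mul_le_mul h2 h3 (abs_nonneg _) (by positivity)
      _ = M ^ (n-1) := mul_one _
  refine (Finset.sum_le_card_nsmul _ _ _ fun σ _ => key σ).trans ?_
  simp [Fintype.card_perm, nsmul_eq_mul]

lemma exists_clm_inverse (f : EuclideanSpace ℝ (Fin n) →L[ℝ] EuclideanSpace ℝ (Fin n))
    (hdet : 0 < f.det) (M : ℝ) (hM : 0 ≤ M) (hfM : clmFrob f ≤ M) :
    ∃ g : EuclideanSpace ℝ (Fin n) →L[ℝ] EuclideanSpace ℝ (Fin n),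
      f.comp g = ContinuousLinearMap.id ℝ _ ∧ g.comp f = ContinuousLinearMap.id ℝ _ ∧
      clmFrob g ≤ (n : ℝ) * ((Nat.factorial n : ℝ) * M ^ (n - 1)) / f.det := by
  classical
  set b := (EuclideanSpace.basisFun (Fin n) ℝ).toBasis with hb
  have hbj : ∀ j, b j = EuclideanSpace.single j 1 := by
    intro j
    rw [hb, OrthonormalBasis.coe_toBasis, EuclideanSpace.basisFun_apply]
  have hrepr : ∀ (x : EuclideanSpace ℝ (Fin n)) i, b.repr x i = x i := by
    intro x i
    rw [hb, OrthonormalBasis.coe_toBasis_repr_apply, EuclideanSpace.basisFun_repr]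
  set A := LinearMap.toMatrix b b (f : EuclideanSpace ℝ (Fin n) →ₗ[ℝ] EuclideanSpace ℝ (Fin n))
    with hA
  have hAdet : A.det = f.det := by
    rw [hA, LinearMap.det_toMatrix]
  have hAunit : IsUnit A.det := isUnit_iff_ne_zero.mpr (by rw [hAdet]; exact ne_of_gt hdet)
  set B := A⁻¹ with hBdef
  set g := LinearMap.toContinuousLinearMap (Matrix.toLin b b B) with hg
  have hgcoe : (g : EuclideanSpace ℝ (Fin n) →ₗ[ℝ] EuclideanSpace ℝ (Fin n)) =
      Matrix.toLin b b B := rfl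
  have hfcoe : (f : EuclideanSpace ℝ (Fin n) →ₗ[ℝ] EuclideanSpace ℝ (Fin n)) =
      Matrix.toLin b b A := by rw [hA, Matrix.toLin_toMatrix]
  have hfg : f.comp g = ContinuousLinearMap.id ℝ _ := by
    apply ContinuousLinearMap.coe_injective
    push_cast [ContinuousLinearMap.coe_comp]
    rw [hgcoe, hfcoe, ← Matrix.toLin_mul, Matrix.mul_nonsing_inv A hAunit, Matrix.toLin_one]
  have hgf : g.comp f = ContinuousLinearMap.id ℝ _ := by
    apply ContinuousLinearMap.coe_injective
    push_cast [ContinuousLinearMap.coe_comp]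
    rw [hgcoe, hfcoe, ← Matrix.toLin_mul, Matrix.nonsing_inv_mul A hAunit, Matrix.toLin_one]
  have hentry : ∀ i j, g (EuclideanSpace.single j 1) i = B i j := by
    intro i j
    have h1 : g (EuclideanSpace.single j 1) = Matrix.toLin b b B (b j) := by
      rw [hbj j]; rfl
    rw [h1, ← hrepr (Matrix.toLin b b B (b j)) i, Matrix.toLin_self]
    simp [Module.Basis.repr_self, Finsupp.single_apply]
  refine ⟨g, hfg, hgf, ?_⟩
  set K : ℝ := (Nat.factorial n : ℝ) * M ^ (n - 1) / f.det with hK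
  have hK0 : 0 ≤ K := by rw [hK]; positivity
  have hAij : ∀ i j, |A i j| ≤ M := by
    intro i j
    have h0 : A i j = f (EuclideanSpace.single j 1) i := by
      rw [hA, LinearMap.toMatrix_apply, hbj, hrepr]; rfl
    rw [h0]
    exact (entry_abs_le_clmFrob f i j).trans hfM
  have hBij : ∀ i j, |B i j| ≤ K := by
    intro i j
    have h1 : B i j = (f.det)⁻¹ * A.adjugate i j := by
      rw [hBdef, Matrix.inv_def, Matrix.smul_apply, Ring.inverse_eq_inv', smul_eq_mul, hAdet]
    rw [h1, abs_mul, abs_of_nonneg (inv_nonneg.mpr hdet.le)]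
    calc f.det⁻¹ * |A.adjugate i j|
        ≤ f.det⁻¹ * ((Nat.factorial n : ℝ) * M ^ (n - 1)) :=
          mul_le_mul_of_nonneg_left (adjugate_entry_bound A M hM hAij i j)
            (inv_nonneg.mpr hdet.le)
      _ = K := by rw [hK, div_eq_mul_inv, mul_comm]
  have hsum : ∀ j, ‖g (EuclideanSpace.single j 1)‖ ^ 2 ≤ (n : ℝ) * K ^ 2 := by
    intro j
    rw [EuclideanSpace.norm_eq, Real.sq_sqrt (Finset.sum_nonneg fun _ _ => sq_nonneg _)]
    calc ∑ i, ‖g (EuclideanSpace.single j 1) i‖ ^ 2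
        ≤ ∑ _i : Fin n, K ^ 2 := by
          refine Finset.sum_le_sum fun i _ => ?_
          rw [Real.norm_eq_abs, hentry i j]
          exact pow_le_pow_left₀ (abs_nonneg _) (hBij i j) 2
      _ = (n : ℝ) * K ^ 2 := by
          rw [Finset.sum_const, Finset.card_univ, Fintype.card_fin, nsmul_eq_mul]
  have h2 : clmFrob g ≤ (n : ℝ) * K := by
    have hnK : (0:ℝ) ≤ (n:ℝ) * K := mul_nonneg (Nat.cast_nonneg n) hK0
    rw [clmFrob, ← Real.sqrt_sq hnK]
    refine Real.sqrt_le_sqrt ?_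
    calc ∑ j, ‖g (EuclideanSpace.single j 1)‖ ^ 2 ≤ ∑ _j : Fin n, (n:ℝ) * K^2 :=
          Finset.sum_le_sum fun j _ => hsum j
      _ = ((n:ℝ)*K)^2 := by
          rw [Finset.sum_const, Finset.card_univ, Fintype.card_fin, nsmul_eq_mul]; ring
  refine h2.trans_eq ?_
  rw [hK]; ring

lemma continuous_clmFrob {n m : ℕ} :
    Continuous fun f : EuclideanSpace ℝ (Fin n) →L[ℝ] EuclideanSpace ℝ (Fin m) => clmFrob f := by
  unfold clmFrob
  refine Real.continuous_sqrt.comp (continuous_finset_sum _ fun j _ => ?_)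
  exact ((ContinuousLinearMap.apply ℝ (EuclideanSpace ℝ (Fin m))
    (EuclideanSpace.single j 1)).continuous.norm.pow 2)

/-- **Change-of-variables gradient estimate** at the core of the paper's global Korn
inequality (Lemma in Section 2.1): with `b = u ∘ η`,
`∫_{η(Q)} ‖Du‖² ≤ c_n (M^{2n-2}/ε₀) ∫_Q ‖Db‖²`. -/
theorem gradient_change_of_variables (n : ℕ) (hn : 1 ≤ n) :
    ∃ c : ℝ, 0 < c ∧
      ∀ Q : Set (EuclideanSpace ℝ (Fin n)), IsOpen Q → Bornology.IsBounded Q →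
      ∀ ε₀ M : ℝ, 0 < ε₀ → 0 ≤ M →
      ∀ η : EuclideanSpace ℝ (Fin n) → EuclideanSpace ℝ (Fin n),
        Set.InjOn η Q → ContDiffOn ℝ 1 η Q →
        (∀ x ∈ Q, ε₀ ≤ (fderiv ℝ η x).det) →
        (∀ x ∈ Q, clmFrob (fderiv ℝ η x) ≤ M) →
      ∀ u : EuclideanSpace ℝ (Fin n) → EuclideanSpace ℝ (Fin n),
        ContDiffOn ℝ 1 u (η '' Q) →
        (∫ y in η '' Q, clmFrob (fderiv ℝ u y) ^ 2) ≤
          c * (M ^ (2 * n - 2) / ε₀) * ∫ x in Q, clmFrob (fderiv ℝ (u ∘ η) x) ^ 2 := by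
  have hn0 : (0:ℝ) < n := by exact_mod_cast hn
  have hfac : (0:ℝ) < (Nat.factorial n : ℝ) := by exact_mod_cast Nat.factorial_pos n
  refine ⟨((n:ℝ) * (Nat.factorial n : ℝ))^2, by positivity, ?_⟩
  intro Q hQo hQb ε₀ M hε₀ hM η hinj hηC hdetQ hηM u huC
  set c : ℝ := ((n:ℝ) * (Nat.factorial n : ℝ))^2 with hc
  set K : ℝ := c * (M ^ (2*n - 2) / ε₀) with hKdef
  -- differentiability of η
  have hηdiff : ∀ x ∈ Q, DifferentiableAt ℝ η x := fun x hx =>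
    (hηC.contDiffAt (hQo.mem_nhds hx)).differentiableAt one_ne_zero
  -- inverses of the derivative
  have hinv : ∀ x ∈ Q, ∃ g, (fderiv ℝ η x).comp g = ContinuousLinearMap.id ℝ _ ∧
      g.comp (fderiv ℝ η x) = ContinuousLinearMap.id ℝ _ ∧
      clmFrob g ≤ (n : ℝ) * ((Nat.factorial n : ℝ) * M ^ (n - 1)) / (fderiv ℝ η x).det :=
    fun x hx => exists_clm_inverse _ (lt_of_lt_of_le hε₀ (hdetQ x hx)) M hM (hηM x hx)
  -- openness of the image
  have hopen : IsOpen (η '' Q) := by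
    rw [isOpen_iff_mem_nhds]
    rintro y ⟨x, hx, rfl⟩
    obtain ⟨g, hfg, hgf, -⟩ := hinv x hx
    have h₁ : Function.LeftInverse g (fderiv ℝ η x) := fun v => by
      simpa using ContinuousLinearMap.ext_iff.mp hgf v
    have h₂ : Function.RightInverse g (fderiv ℝ η x) := fun v => by
      simpa using ContinuousLinearMap.ext_iff.mp hfg v
    set e := ContinuousLinearEquiv.equivOfInverse (fderiv ℝ η x) g h₁ h₂ with he
    have hstrict : HasStrictFDerivAt η (e : EuclideanSpace ℝ (Fin n) →L[ℝ]
        EuclideanSpace ℝ (Fin n)) x := by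
      have h3 := (hηC.contDiffAt (hQo.mem_nhds hx)).hasStrictFDerivAt one_ne_zero
      have : (e : EuclideanSpace ℝ (Fin n) →L[ℝ] EuclideanSpace ℝ (Fin n)) = fderiv ℝ η x := by
        ext v
        simp [he, ContinuousLinearEquiv.equivOfInverse_apply]
      rwa [this]
    rw [← hstrict.map_nhds_eq_of_equiv]
    exact Filter.image_mem_map (hQo.mem_nhds hx)
  have hudiff : ∀ y ∈ η '' Q, DifferentiableAt ℝ u y := fun y hy =>
    (huC.contDiffAt (hopen.mem_nhds hy)).differentiableAt one_ne_zero
  -- chain rule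
  have hchain : ∀ x ∈ Q, fderiv ℝ (u ∘ η) x =
      (fderiv ℝ u (η x)).comp (fderiv ℝ η x) := fun x hx =>
    fderiv_comp x (hudiff _ (Set.mem_image_of_mem η hx)) (hηdiff x hx)
  set F : EuclideanSpace ℝ (Fin n) → ℝ :=
    fun x => |(fderiv ℝ η x).det| * clmFrob (fderiv ℝ u (η x)) ^ 2 with hF
  set G : EuclideanSpace ℝ (Fin n) → ℝ :=
    fun x => clmFrob (fderiv ℝ (u ∘ η) x) ^ 2 with hG
  -- change of variables
  have hcov : (∫ y in η '' Q, clmFrob (fderiv ℝ u y) ^ 2) = ∫ x in Q, F x := by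
    have := integral_image_eq_integral_abs_det_fderiv_smul volume hQo.measurableSet
      (fun x hx => ((hηdiff x hx).hasFDerivAt).hasFDerivWithinAt) hinj
      (fun y => clmFrob (fderiv ℝ u y) ^ 2)
    simpa [smul_eq_mul] using this
  -- pointwise bounds
  have hpoint : ∀ x ∈ Q, F x ≤ K * G x := by
    intro x hx
    obtain ⟨g, hfg, hgf, hgbound⟩ := hinv x hx
    set D : ℝ := (fderiv ℝ η x).det with hD
    have hDε : ε₀ ≤ D := hdetQ x hx
    have hDpos : 0 < D := lt_of_lt_of_le hε₀ hDε
    set Gm : ℝ := (n : ℝ) * ((Nat.factorial n : ℝ) * M ^ (n - 1)) with hGm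
    have hGm0 : 0 ≤ Gm := by rw [hGm]; positivity
    have hDu : fderiv ℝ u (η x) = (fderiv ℝ (u ∘ η) x).comp g := by
      rw [hchain x hx, ContinuousLinearMap.comp_assoc, hfg, ContinuousLinearMap.comp_id]
    have ha : clmFrob (fderiv ℝ u (η x)) ≤ clmFrob (fderiv ℝ (u ∘ η) x) * (Gm / D) := by
      rw [hDu]
      exact (clmFrob_comp_le _ _).trans
        (mul_le_mul_of_nonneg_left hgbound (clmFrob_nonneg _))
    have h1 : F x ≤ D * (clmFrob (fderiv ℝ (u ∘ η) x) * (Gm / D)) ^ 2 := by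
      have hFx : F x = D * clmFrob (fderiv ℝ u (η x)) ^ 2 := by
        show |(fderiv ℝ η x).det| * _ = _
        rw [← hD, abs_of_pos hDpos]
      rw [hFx]
      exact mul_le_mul_of_nonneg_left
        (pow_le_pow_left₀ (clmFrob_nonneg _) ha 2) hDpos.le
    have h2 : D * (clmFrob (fderiv ℝ (u ∘ η) x) * (Gm / D)) ^ 2 = Gm^2 / D * G x := by
      rw [hG]
      field_simp
    have h3 : Gm^2 / D * G x ≤ Gm^2 / ε₀ * G x := by
      refine mul_le_mul_of_nonneg_right ?_ (sq_nonneg _)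
      exact div_le_div_of_nonneg_left (sq_nonneg _) hε₀ hDε
    have h4 : Gm^2 / ε₀ = K := by
      rw [hKdef, hc, hGm]
      rw [mul_pow, mul_pow, ← pow_mul]
      rw [show (n-1) * 2 = 2*n - 2 by omega]
      ring
    calc F x ≤ D * (clmFrob (fderiv ℝ (u ∘ η) x) * (Gm / D)) ^ 2 := h1
      _ = Gm^2 / D * G x := h2
      _ ≤ Gm^2 / ε₀ * G x := h3
      _ = K * G x := by rw [h4]
  have hrev : ∀ x ∈ Q, G x ≤ M^2 / ε₀ * F x := by
    intro x hx
    have hDε : ε₀ ≤ (fderiv ℝ η x).det := hdetQ x hx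
    have h1 : clmFrob (fderiv ℝ (u ∘ η) x) ≤ clmFrob (fderiv ℝ u (η x)) * M := by
      rw [hchain x hx]
      exact (clmFrob_comp_le _ _).trans
        (mul_le_mul_of_nonneg_left (hηM x hx) (clmFrob_nonneg _))
    have h2 : G x ≤ clmFrob (fderiv ℝ u (η x))^2 * M^2 := by
      rw [hG]
      calc clmFrob (fderiv ℝ (u ∘ η) x) ^ 2
          ≤ (clmFrob (fderiv ℝ u (η x)) * M)^2 :=
            pow_le_pow_left₀ (clmFrob_nonneg _) h1 2
        _ = clmFrob (fderiv ℝ u (η x))^2 * M^2 := mul_pow _ _ 2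
    refine h2.trans ?_
    have hFx : F x = (fderiv ℝ η x).det * clmFrob (fderiv ℝ u (η x)) ^ 2 := by
      show |(fderiv ℝ η x).det| * _ = _
      rw [abs_of_pos (lt_of_lt_of_le hε₀ hDε)]
    rw [hFx, div_mul_eq_mul_div, le_div_iff₀ hε₀]
    nlinarith [mul_le_mul_of_nonneg_left hDε
      (mul_nonneg (sq_nonneg M) (sq_nonneg (clmFrob (fderiv ℝ u (η x)))))]
  -- measurability of G on Q
  have hGsm : AEStronglyMeasurable G (volume.restrict Q) := by
    have h1 : ContinuousOn (fderiv ℝ (u ∘ η)) Q :=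
      (huC.comp hηC (Set.mapsTo_image η Q)).continuousOn_fderiv_of_isOpen hQo le_rfl
    exact (((continuous_clmFrob.comp_continuousOn h1).pow 2)).aestronglyMeasurable
      hQo.measurableSet
  have hK0 : 0 ≤ K := by rw [hKdef, hc]; positivity
  by_cases hFi : IntegrableOn F Q volume
  · have hGint : IntegrableOn G Q volume := by
      refine Integrable.mono' ((hFi.const_mul (M^2/ε₀))) hGsm ?_
      refine (ae_restrict_iff' hQo.measurableSet).mpr (ae_of_all _ fun x hx => ?_)
      rw [Real.norm_eq_abs, abs_of_nonneg (by rw [hG]; positivity)]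
      exact hrev x hx
    rw [hcov]
    calc (∫ x in Q, F x) ≤ ∫ x in Q, K * G x :=
          setIntegral_mono_on hFi (hGint.const_mul K) hQo.measurableSet hpoint
      _ = K * ∫ x in Q, G x := integral_const_mul K G
    -- goal closed?
  · rw [hcov, integral_undef hFi]
    exact mul_nonneg hK0 (setIntegral_nonneg hQo.measurableSet fun x _ => sq_nonneg _)
end

section
/- Let h > 0, N ∈ ℕ with N ≥ 1, set T = N·h, let A ≥ 0, and let f : [0,T] → [0,∞) be Lebesgue integrable. Suppose that for every t ∈ [h,T] one has (1/h)·∫_{t−h}^{t} f(s) ds ≤ A + (1/(2T))·∫₀^T f(s) ds. Then ∫₀^T f(s) ds ≤ 2·T·A. -/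
open MeasureTheory

/-- **Absorption argument** converting the `h`-averaged kinetic-energy bound of the
time-delayed energy inequality into a global a-priori bound (paper, Sections 3.2, 4.2):
if `(1/h)∫_{t−h}^t f ≤ A + (1/(2T))∫₀^T f` for all `t ∈ [h,T]` with `T = Nh`,
then `∫₀^T f ≤ 2TA`. -/
theorem averaged_bound_absorption (h : ℝ) (hh : 0 < h) (N : ℕ) (hN : 1 ≤ N)
    (T : ℝ) (hT : T = (N : ℝ) * h) (A : ℝ) (hA : 0 ≤ A) (f : ℝ → ℝ)
    (hf_nonneg : ∀ s ∈ Set.Icc (0 : ℝ) T, 0 ≤ f s)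
    (hf_int : IntervalIntegrable f volume 0 T)
    (hmean : ∀ t ∈ Set.Icc h T,
      (1 / h) * ∫ s in (t - h)..t, f s ≤ A + (1 / (2 * T)) * ∫ s in (0 : ℝ)..T, f s) :
    (∫ s in (0 : ℝ)..T, f s) ≤ 2 * T * A := by
  have hN1 : (1 : ℝ) ≤ (N : ℝ) := by exact_mod_cast hN
  have hT0 : 0 < T := by rw [hT]; nlinarith
  set I := ∫ s in (0 : ℝ)..T, f s with hI
  set a : ℕ → ℝ := fun k => (k : ℝ) * h with ha
  have hsub : ∀ k, k ≤ N → a k ∈ Set.Icc (0 : ℝ) T := by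
    intro k hk
    constructor
    · positivity
    · rw [hT]
      have hkN : (k : ℝ) ≤ (N : ℝ) := by exact_mod_cast hk
      simp only [ha]
      nlinarith
  have hint : ∀ k < N, IntervalIntegrable f volume (a k) (a (k + 1)) := by
    intro k hk
    apply hf_int.mono_set
    rw [Set.uIcc_of_le (by nlinarith : (0:ℝ) ≤ T)]
    exact Set.uIcc_subset_Icc (hsub k hk.le) (hsub (k + 1) hk)
  have hsum : ∑ k ∈ Finset.range N, ∫ s in a k..a (k + 1), f s = I := by
    rw [intervalIntegral.sum_integral_adjacent_intervals hint]
    simp [ha, ← hT]; rfl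
  have hterm : ∀ k < N, (∫ s in a k..a (k + 1), f s) ≤ h * (A + (1 / (2 * T)) * I) := by
    intro k hk
    have hmem : a (k + 1) ∈ Set.Icc h T := by
      have := hsub (k + 1) hk
      constructor
      · simp only [ha]
        have : (1 : ℝ) ≤ ((k : ℝ) + 1) := by
          have := Nat.cast_nonneg (α := ℝ) k; linarith
        push_cast
        nlinarith
      · have := (hsub (k + 1) hk).2
        exact this
    have := hmean (a (k + 1)) hmem
    have hd : a (k + 1) - h = a k := by simp [ha]; ring
    rw [hd] at this
    have h1 : (1 / h) * ∫ s in a k..a (k + 1), f s ≤ A + (1 / (2 * T)) * I := this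
    calc (∫ s in a k..a (k + 1), f s)
        = h * ((1 / h) * ∫ s in a k..a (k + 1), f s) := by
          field_simp
      _ ≤ h * (A + (1 / (2 * T)) * I) := by
          exact mul_le_mul_of_nonneg_left h1 hh.le
  have hbound : I ≤ (N : ℝ) * (h * (A + (1 / (2 * T)) * I)) := by
    have hs : ∑ k ∈ Finset.range N, ∫ s in a k..a (k + 1), f s
        ≤ ∑ k ∈ Finset.range N, h * (A + (1 / (2 * T)) * I) :=
      Finset.sum_le_sum (fun k hk => hterm k (Finset.mem_range.mp hk))
    rw [hsum, Finset.sum_const, Finset.card_range, nsmul_eq_mul] at hs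
    exact hs
  have hkey : I ≤ T * A + I / 2 := by
    have : (N : ℝ) * (h * (A + (1 / (2 * T)) * I)) = T * A + I / 2 := by
      rw [hT]; field_simp
    linarith [hbound, this.symm.le]
  linarith
end
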